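/- Weak convergence of regularized periodic functions to their cell average: let v : ℝ × ℝ → ℝ be continuous, Y-periodic in its second variable, and Lipschitz in its first variable uniformly in the second variable, and let g : ℝ → ℝ be continuous with compact support. Then ∫_ℝ g(x)·v(x, x/ε) dx tends to ∫_ℝ g(x)·(∫_{−1/2}^{1/2} v(x, y) dy) dx as ε → 0⁺. -/

import Mathlib

set_option maxHeartbeats 1000000


open MeasureTheory intervalIntegral Set Filter Topology

/-- The regularization operator `(B_ε w)(x) = w(x, x/ε)`. -/
noncomputable def regOp (ε : ℝ) (w : ℝ → ℝ → ℝ) (x : ℝ) : ℝ := w x (x / ε)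

/-- Single-scale oscillation lemma: for a continuous 1-periodic function `h`,
`∫_a^b h(x/ε) dx → (b-a)·∫_0^1 h` as `ε → 0⁺`. -/
lemma osc_tendsto (h : ℝ → ℝ) (hc : Continuous h) (hp : Function.Periodic h 1)
    (a b : ℝ) :
    Tendsto (fun ε : ℝ => ∫ x in a..b, h (x / ε)) (𝓝[>] 0)
      (𝓝 ((b - a) * ∫ y in (0:ℝ)..1, h y)) := by
  set m : ℝ := ∫ y in (0:ℝ)..1, h y with hm
  set F : ℝ → ℝ := fun t => ∫ u in (0:ℝ)..t, h u with hF
  have hint : ∀ t₁ t₂ : ℝ, IntervalIntegrable h volume t₁ t₂ := fun t₁ t₂ =>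
    hc.intervalIntegrable _ _
  have hFcont : Continuous F := intervalIntegral.continuous_primitive hint 0
  set G : ℝ → ℝ := fun t => F t - m * t with hG
  have hGper : Function.Periodic G 1 := by
    intro t
    have h1 : ∫ x in t..t + 1, h x = m := by
      rw [hp.intervalIntegral_add_eq t 0, zero_add]
    have h2 : F (t + 1) = F t + ∫ x in t..t + 1, h x :=
      (integral_add_adjacent_intervals (hint 0 t) (hint t (t + 1))).symm
    simp only [hG]
    rw [h2, h1]; ring
  have hGcont : Continuous G := hFcont.sub (continuous_const.mul continuous_id)
  obtain ⟨C, hC⟩ := isBounded_iff_forall_norm_le.1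
    (hGper.isBounded_of_continuous one_ne_zero hGcont)
  have key : ∀ ε : ℝ, 0 < ε →
      (∫ x in a..b, h (x / ε)) = (b - a) * m + ε * (G (b / ε) - G (a / ε)) := by
    intro ε hε
    rw [intervalIntegral.integral_comp_div (f := h) hε.ne']
    have : ∫ x in a / ε..b / ε, h x = F (b / ε) - F (a / ε) := by
      rw [intervalIntegral.integral_interval_sub_left (hint 0 (b/ε)) (hint 0 (a/ε))]
    rw [smul_eq_mul, this]
    have ha : F (a / ε) = G (a / ε) + m * (a / ε) := by simp [hG]
    have hb : F (b / ε) = G (b / ε) + m * (b / ε) := by simp [hG]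
    rw [ha, hb]
    field_simp
    ring
  have h2 : Tendsto (fun ε : ℝ => ε * (G (b / ε) - G (a / ε))) (𝓝[>] 0) (𝓝 0) := by
    apply squeeze_zero_norm'
    · filter_upwards [self_mem_nhdsWithin] with ε (hε : 0 < ε)
      have h1 := hC _ (mem_range_self (b / ε))
      have h2 := hC _ (mem_range_self (a / ε))
      have : |G (b / ε) - G (a / ε)| ≤ 2 * C := by
        calc |G (b / ε) - G (a / ε)| ≤ |G (b/ε)| + |G (a/ε)| := abs_sub _ _
          _ ≤ 2 * C := by simp only [Real.norm_eq_abs] at h1 h2; linarith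
      calc ‖ε * (G (b / ε) - G (a / ε))‖ = ε * |G (b / ε) - G (a / ε)| := by
            rw [Real.norm_eq_abs, abs_mul, abs_of_pos hε]
        _ ≤ ε * (2 * C) := by
            exact mul_le_mul_of_nonneg_left this hε.le
        _ = 2 * C * ε := by ring
    · have : Tendsto (fun ε : ℝ => (2 * C) * ε) (𝓝 0) (𝓝 ((2 * C) * 0)) :=
        (tendsto_id.const_mul _)
      simpa using this.mono_left nhdsWithin_le_nhds
  have h3 : Tendsto (fun ε : ℝ => (b - a) * m + ε * (G (b / ε) - G (a / ε)))
      (𝓝[>] 0) (𝓝 ((b - a) * m)) := by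
    simpa using (tendsto_const_nhds (x := (b - a) * m)).add h2
  refine h3.congr' ?_
  filter_upwards [self_mem_nhdsWithin] with ε hε
  exact (key ε hε).symm

/-- Weak convergence of regularized Y-periodic functions to their cell
average: `∫ g·B_ε v → ∫ g·(∫_Y v(·, y) dy)` as `ε → 0⁺`. -/
theorem regOp_weak_convergence (v : ℝ → ℝ → ℝ)
    (hv : Continuous fun p : ℝ × ℝ => v p.1 p.2)
    (hper : ∀ x y : ℝ, v x (y + 1) = v x y)
    (L : ℝ) (hLip : ∀ x x' y : ℝ, |v x y - v x' y| ≤ L * |x - x'|)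
    (g : ℝ → ℝ) (hg : Continuous g) (hgsupp : HasCompactSupport g) :
    Tendsto (fun ε : ℝ => ∫ x : ℝ, g x * regOp ε v x) (𝓝[>] 0)
      (𝓝 (∫ x : ℝ, g x * ∫ y in (-(1:ℝ)/2)..(1/2), v x y)) := by
  -- preliminaries
  have hL0 : 0 ≤ L := le_trans (abs_nonneg _) (by simpa using hLip 0 1 0)
  have hvx : ∀ x₀ : ℝ, Continuous (v x₀) := fun x₀ =>
    hv.comp (continuous_const.prodMk continuous_id)
  have hperiodic : ∀ x₀ : ℝ, Function.Periodic (v x₀) 1 := fun x₀ y => hper x₀ y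
  set vbar : ℝ → ℝ := fun x => ∫ y in (-(1:ℝ)/2)..(1/2), v x y with hvbar
  have hvbar01 : ∀ x, vbar x = ∫ y in (0:ℝ)..1, v x y := by
    intro x
    have h := (hperiodic x).intervalIntegral_add_eq (-(1:ℝ)/2) 0
    have e1 : -(1:ℝ)/2 + 1 = 1/2 := by norm_num
    rw [e1, zero_add] at h
    exact h
  have hvbarLip : ∀ x x' : ℝ, |vbar x - vbar x'| ≤ L * |x - x'| := by
    intro x x'
    have hi1 : IntervalIntegrable (v x) volume (-(1:ℝ)/2) (1/2) :=
      (hvx x).intervalIntegrable _ _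
    have hi2 : IntervalIntegrable (v x') volume (-(1:ℝ)/2) (1/2) :=
      (hvx x').intervalIntegrable _ _
    have hsub : vbar x - vbar x' = ∫ y in (-(1:ℝ)/2)..(1/2), (v x y - v x' y) :=
      (intervalIntegral.integral_sub hi1 hi2).symm
    rw [hsub, ← Real.norm_eq_abs]
    have := intervalIntegral.norm_integral_le_of_norm_le_const
      (C := L * |x - x'|) (f := fun y => v x y - v x' y)
      (a := (-(1:ℝ)/2)) (b := (1/2))
      (fun y _ => by simpa [Real.norm_eq_abs] using hLip x x' y)
    calc ‖∫ y in (-(1:ℝ)/2)..(1/2), (v x y - v x' y)‖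
        ≤ L * |x - x'| * |(1:ℝ)/2 - -(1:ℝ)/2| := this
      _ = L * |x - x'| := by norm_num
  have hvbarCont : Continuous vbar := by
    have : LipschitzWith (Real.toNNReal L) vbar := by
      apply LipschitzWith.of_dist_le_mul
      intro x y
      rw [Real.dist_eq, Real.dist_eq, Real.coe_toNNReal L hL0]
      exact hvbarLip x y
    exact this.continuous
  -- support of g
  obtain ⟨r, hr⟩ := hgsupp.isBounded.subset_closedBall 0
  set r' : ℝ := max r 0 with hr'
  set S : ℝ := r' + 1 with hSdef
  have hr'0 : 0 ≤ r' := le_max_right _ _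
  have hS : 0 < S := by positivity
  have hsupp' : tsupport g ⊆ Ioc (-S) S := by
    intro x hx
    have h2 := hr hx
    rw [Real.closedBall_eq_Icc] at h2
    have h3 : r ≤ r' := le_max_left _ _
    have h21 : (0:ℝ) - r ≤ x := h2.1
    have h22 : x ≤ 0 + r := h2.2
    constructor
    · simp only [hSdef]; linarith
    · simp only [hSdef]; linarith
  have hsupp : tsupport g ⊆ Icc (-S) S := hsupp'.trans Ioc_subset_Icc_self
  have hg0 : ∀ x : ℝ, x ∉ Ioc (-S) S → g x = 0 := fun x hx =>
    image_eq_zero_of_notMem_tsupport (fun hmem => hx (hsupp' hmem))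
  have hg0' : ∀ x : ℝ, x ∉ Icc (-S) S → g x = 0 := fun x hx =>
    image_eq_zero_of_notMem_tsupport (fun hmem => hx (hsupp hmem))
  -- bound M on v over the strip
  obtain ⟨M0, hM0⟩ := (isCompact_Icc.prod isCompact_Icc :
      IsCompact (Icc (-S) S ×ˢ Icc (0:ℝ) 1)).exists_bound_of_continuousOn hv.continuousOn
  set M : ℝ := max M0 0 with hMdef
  have hM_nonneg : 0 ≤ M := le_max_right _ _
  have hM : ∀ x ∈ Icc (-S) S, ∀ y : ℝ, |v x y| ≤ M := by
    intro x hx y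
    have hfr : v x (Int.fract y) = v x y := by
      have := (hperiodic x).sub_int_mul_eq (x := y) ⌊y⌋
      rw [mul_one] at this
      rw [← Int.self_sub_floor y]
      exact this
    rw [← hfr]
    have hmem : ((x, Int.fract y) : ℝ × ℝ) ∈ Icc (-S) S ×ˢ Icc (0:ℝ) 1 :=
      ⟨hx, ⟨Int.fract_nonneg y, (Int.fract_lt_one y).le⟩⟩
    have := hM0 _ hmem
    simp only [Real.norm_eq_abs] at this
    exact this.trans (le_max_left _ _)
  have hMvbar : ∀ x ∈ Icc (-S) S, |vbar x| ≤ M := by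
    intro x hx
    rw [← Real.norm_eq_abs]
    have := intervalIntegral.norm_integral_le_of_norm_le_const
      (C := M) (f := v x) (a := (-(1:ℝ)/2)) (b := (1/2))
      (fun y _ => by rw [Real.norm_eq_abs]; exact hM x hx y)
    calc ‖vbar x‖ ≤ M * |(1:ℝ)/2 - -(1:ℝ)/2| := this
      _ = M := by norm_num
  -- bound on g
  obtain ⟨Mg0, hMg0⟩ := (isCompact_Icc :
      IsCompact (Icc (-S) S)).exists_bound_of_continuousOn hg.continuousOn
  set Mg : ℝ := max Mg0 0 with hMgdef
  have hMg_nonneg : 0 ≤ Mg := le_max_right _ _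
  have hMg : ∀ x : ℝ, |g x| ≤ Mg := by
    intro x
    by_cases hx : x ∈ Icc (-S) S
    · exact le_trans (by simpa [Real.norm_eq_abs] using hMg0 x hx) (le_max_left _ _)
    · rw [hg0' x hx]; simpa using hMg_nonneg
  -- uniform continuity of g on the compact interval
  have hgu : UniformContinuousOn g (Icc (-S) S) :=
    isCompact_Icc.uniformContinuousOn_of_continuous hg.continuousOn
  -- reduction to interval integrals
  have hregcont : ∀ ε : ℝ, ε ≠ 0 → Continuous (fun x => v x (x / ε)) := fun ε hε =>
    hv.comp (continuous_id.prodMk (continuous_id.div_const ε))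
  have hI1 : ∀ ε : ℝ, 0 < ε →
      (∫ x : ℝ, g x * regOp ε v x) = ∫ x in (-S)..S, g x * v x (x / ε) := by
    intro ε hε
    have hz : ∀ x : ℝ, x ∉ Ioc (-S) S → g x * v x (x / ε) = 0 := fun x hx => by
      rw [hg0 x hx, zero_mul]
    rw [intervalIntegral.integral_of_le (by linarith : -S ≤ S)]
    rw [setIntegral_eq_integral_of_forall_compl_eq_zero hz]
    rfl
  have hI2 : (∫ x : ℝ, g x * vbar x) = ∫ x in (-S)..S, g x * vbar x := by
    have hz : ∀ x : ℝ, x ∉ Ioc (-S) S → g x * vbar x = 0 := fun x hx => by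
      rw [hg0 x hx, zero_mul]
    rw [intervalIntegral.integral_of_le (by linarith : -S ≤ S)]
    rw [setIntegral_eq_integral_of_forall_compl_eq_zero hz]
  rw [hI2]
  have main : Tendsto (fun ε : ℝ => ∫ x in (-S)..S, g x * v x (x / ε)) (𝓝[>] 0)
      (𝓝 (∫ x in (-S)..S, g x * vbar x)) := by
    rw [Metric.tendsto_nhds]
    intro η hη
    set η1 : ℝ := η / (16 * S * (M + 1)) with hη1def
    have hη1 : 0 < η1 := by positivity
    obtain ⟨δ₀, hδ₀, hδ₀'⟩ := Metric.uniformContinuousOn_iff.1 hgu η1 hη1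
    set c2 : ℝ := η / (16 * S * (Mg + 1) * (L + 1)) with hc2def
    have hc2 : 0 < c2 := by positivity
    have hminpos : 0 < min (δ₀ / 2) c2 := lt_min (by linarith) hc2
    obtain ⟨N, hN⟩ := exists_nat_gt (2 * S / min (δ₀ / 2) c2)
    have hNpos : 0 < (N : ℝ) := lt_trans (by positivity) hN
    have hN0 : (N : ℝ) ≠ 0 := ne_of_gt hNpos
    set δ : ℝ := 2 * S / N with hδdef
    have hδpos : 0 < δ := by positivity
    have hδlt : δ < min (δ₀ / 2) c2 := by
      rw [hδdef, div_lt_iff₀ hNpos]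
      have := (div_lt_iff₀ hminpos).1 hN
      linarith [this]
    have hδδ₀ : δ < δ₀ := by
      have := hδlt.trans_le (min_le_left _ _)
      linarith
    have hδc2 : δ ≤ c2 := (hδlt.trans_le (min_le_right _ _)).le
    have hNδ : (N : ℝ) * δ = 2 * S := by rw [hδdef]; field_simp
    set P : ℕ → ℝ := fun i => -S + i * δ with hPdef
    have hP0 : P 0 = -S := by simp [hPdef]
    have hPN : P N = S := by
      simp only [hPdef]
      rw [hδdef]
      field_simp
      ring
    have hPsucc : ∀ i : ℕ, P (i + 1) - P i = δ := by
      intro i; simp only [hPdef]; push_cast; ring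
    have hPle : ∀ i : ℕ, P i ≤ P (i + 1) := fun i => by
      have := hPsucc i; linarith
    have hPmem : ∀ i : ℕ, i ≤ N → P i ∈ Icc (-S) S := by
      intro i hi
      have h1 : (0:ℝ) ≤ (i : ℝ) * δ := by positivity
      have h2 : (i : ℝ) * δ ≤ (N : ℝ) * δ :=
        mul_le_mul_of_nonneg_right (Nat.cast_le.2 hi) hδpos.le
      exact ⟨by simp only [hPdef]; linarith, by simp only [hPdef]; linarith [hNδ]⟩
    set cC : ℝ := η / (4 * N * (Mg + 1)) with hcCdef
    have hcCpos : 0 < cC := by positivity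
    have hev : ∀ᶠ ε in 𝓝[>] (0:ℝ), ∀ i ∈ Finset.range N,
        |(∫ x in P i..P (i + 1), v (P i) (x / ε)) - δ * vbar (P i)| < cC := by
      rw [eventually_all_finset]
      intro i _
      have ht := osc_tendsto (v (P i)) (hvx _) (hperiodic _) (P i) (P (i + 1))
      have hlim : (P (i + 1) - P i) * ∫ y in (0:ℝ)..1, v (P i) y
          = δ * vbar (P i) := by rw [hPsucc i, hvbar01]
      rw [hlim] at ht
      filter_upwards [Metric.tendsto_nhds.1 ht cC hcCpos] with ε hε
      rwa [Real.dist_eq] at hε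
    filter_upwards [hev, self_mem_nhdsWithin] with ε hevε hεmem
    have hεpos : 0 < ε := hεmem
    have hεne : ε ≠ 0 := ne_of_gt hεpos
    rw [Real.dist_eq]
    have hcont1 : Continuous fun x => g x * v x (x / ε) := hg.mul (hregcont ε hεne)
    have hcont2 : Continuous fun x => g x * vbar x := hg.mul hvbarCont
    have hdiff : (∫ x in (-S)..S, g x * v x (x / ε)) - (∫ x in (-S)..S, g x * vbar x)
        = ∫ x in (-S)..S, (g x * v x (x / ε) - g x * vbar x) :=
      (intervalIntegral.integral_sub (hcont1.intervalIntegrable _ _)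
        (hcont2.intervalIntegrable _ _)).symm
    rw [hdiff]
    have htel : (∫ x in (-S)..S, (g x * v x (x / ε) - g x * vbar x))
        = ∑ i ∈ Finset.range N,
            ∫ x in P i..P (i + 1), (g x * v x (x / ε) - g x * vbar x) := by
      rw [intervalIntegral.sum_integral_adjacent_intervals
        (f := fun x => g x * v x (x / ε) - g x * vbar x) (fun k _ => ((hcont1.sub hcont2).intervalIntegrable _ _)), hP0, hPN]
    rw [htel]
    have key : ∀ i ∈ Finset.range N,
        |∫ x in P i..P (i + 1), (g x * v x (x / ε) - g x * vbar x)|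
          ≤ 2 * ((η1 * M + Mg * (L * δ)) * δ) + η / (4 * N) := by
      intro i hi
      have hiN : i < N := Finset.mem_range.1 hi
      have hPi : P i ∈ Icc (-S) S := hPmem i hiN.le
      have hPi1 : P (i + 1) ∈ Icc (-S) S := hPmem (i + 1) hiN
      have hxmem : ∀ x ∈ Set.uIcc (P i) (P (i + 1)),
          x ∈ Icc (-S) S ∧ |x - P i| ≤ δ := by
        intro x hx
        rw [Set.uIcc_of_le (hPle i)] at hx
        refine ⟨⟨le_trans hPi.1 hx.1, le_trans hx.2 hPi1.2⟩, ?_⟩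
        rw [abs_of_nonneg (by linarith [hx.1])]
        have := hPsucc i; linarith [hx.2]
      have hcontvi : Continuous fun x : ℝ => v (P i) (x / ε) :=
        (hvx (P i)).comp (continuous_id.div_const ε)
      have hintB : IntervalIntegrable
          (fun x => g x * v x (x / ε) - g (P i) * v (P i) (x / ε)) volume
          (P i) (P (i + 1)) :=
        (hcont1.sub (continuous_const.mul hcontvi)).intervalIntegrable _ _
      have hintD : IntervalIntegrable
          (fun x => g (P i) * vbar (P i) - g x * vbar x) volume (P i) (P (i + 1)) :=
        (continuous_const.sub hcont2).intervalIntegrable _ _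
      have hintC : IntervalIntegrable
          (fun x => g (P i) * v (P i) (x / ε) - g (P i) * vbar (P i)) volume
          (P i) (P (i + 1)) :=
        ((continuous_const.mul hcontvi).sub continuous_const).intervalIntegrable _ _
      have hsplit : (∫ x in P i..P (i + 1), (g x * v x (x / ε) - g x * vbar x))
          = ((∫ x in P i..P (i + 1), (g x * v x (x / ε) - g (P i) * v (P i) (x / ε)))
            + ∫ x in P i..P (i + 1), (g (P i) * vbar (P i) - g x * vbar x))
            + ∫ x in P i..P (i + 1),
                (g (P i) * v (P i) (x / ε) - g (P i) * vbar (P i)) := by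
        rw [← intervalIntegral.integral_add hintB hintD,
          ← intervalIntegral.integral_add (hintB.add hintD) hintC]
        apply intervalIntegral.integral_congr
        intro x _
        ring
      rw [hsplit]
      have hB : |∫ x in P i..P (i + 1), (g x * v x (x / ε) - g (P i) * v (P i) (x / ε))|
          ≤ (η1 * M + Mg * (L * δ)) * δ := by
        rw [← Real.norm_eq_abs]
        have hb := intervalIntegral.norm_integral_le_of_norm_le_const
          (C := η1 * M + Mg * (L * δ))
          (f := fun x => g x * v x (x / ε) - g (P i) * v (P i) (x / ε))
          (a := P i) (b := P (i + 1)) ?_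
        · calc ‖∫ x in P i..P (i + 1), (g x * v x (x / ε) - g (P i) * v (P i) (x / ε))‖
              ≤ (η1 * M + Mg * (L * δ)) * |P (i + 1) - P i| := hb
            _ = (η1 * M + Mg * (L * δ)) * δ := by
                rw [hPsucc i, abs_of_pos hδpos]
        · intro x hx
          obtain ⟨hxS, hxd⟩ := hxmem x (uIoc_subset_uIcc hx)
          have h1 : |g x - g (P i)| ≤ η1 := by
            have := hδ₀' x hxS (P i) hPi
              (by rw [Real.dist_eq]; exact lt_of_le_of_lt hxd hδδ₀)
            rw [Real.dist_eq] at this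
            exact this.le
          have h2 : |v x (x / ε)| ≤ M := hM x hxS _
          have h3 : |v x (x / ε) - v (P i) (x / ε)| ≤ L * δ :=
            le_trans (hLip x (P i) _) (mul_le_mul_of_nonneg_left hxd hL0)
          have h4 : |g (P i)| ≤ Mg := hMg _
          have heq : g x * v x (x / ε) - g (P i) * v (P i) (x / ε)
              = (g x - g (P i)) * v x (x / ε)
                + g (P i) * (v x (x / ε) - v (P i) (x / ε)) := by ring
          show |g x * v x (x / ε) - g (P i) * v (P i) (x / ε)| ≤ η1 * M + Mg * (L * δ)
          rw [heq]
          calc |(g x - g (P i)) * v x (x / ε)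
                + g (P i) * (v x (x / ε) - v (P i) (x / ε))|
              ≤ |(g x - g (P i)) * v x (x / ε)|
                + |g (P i) * (v x (x / ε) - v (P i) (x / ε))| := abs_add_le _ _
            _ = |g x - g (P i)| * |v x (x / ε)|
                + |g (P i)| * |v x (x / ε) - v (P i) (x / ε)| := by
                rw [abs_mul, abs_mul]
            _ ≤ η1 * M + Mg * (L * δ) :=
                add_le_add (mul_le_mul h1 h2 (abs_nonneg _) hη1.le)
                  (mul_le_mul h4 h3 (abs_nonneg _) hMg_nonneg)
      have hD : |∫ x in P i..P (i + 1), (g (P i) * vbar (P i) - g x * vbar x)|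
          ≤ (η1 * M + Mg * (L * δ)) * δ := by
        rw [← Real.norm_eq_abs]
        have hb := intervalIntegral.norm_integral_le_of_norm_le_const
          (C := η1 * M + Mg * (L * δ))
          (f := fun x => g (P i) * vbar (P i) - g x * vbar x)
          (a := P i) (b := P (i + 1)) ?_
        · calc ‖∫ x in P i..P (i + 1), (g (P i) * vbar (P i) - g x * vbar x)‖
              ≤ (η1 * M + Mg * (L * δ)) * |P (i + 1) - P i| := hb
            _ = (η1 * M + Mg * (L * δ)) * δ := by
                rw [hPsucc i, abs_of_pos hδpos]
        · intro x hx
          obtain ⟨hxS, hxd⟩ := hxmem x (uIoc_subset_uIcc hx)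
          have h1 : |g (P i) - g x| ≤ η1 := by
            have := hδ₀' (P i) hPi x hxS
              (by rw [Real.dist_eq, abs_sub_comm]; exact lt_of_le_of_lt hxd hδδ₀)
            rw [Real.dist_eq] at this
            exact this.le
          have h2 : |vbar x| ≤ M := hMvbar x hxS
          have h3 : |vbar (P i) - vbar x| ≤ L * δ := by
            refine le_trans (hvbarLip (P i) x) ?_
            rw [abs_sub_comm]
            exact mul_le_mul_of_nonneg_left hxd hL0
          have h4 : |g (P i)| ≤ Mg := hMg _
          have heq : g (P i) * vbar (P i) - g x * vbar x
              = (g (P i) - g x) * vbar x + g (P i) * (vbar (P i) - vbar x) := by ring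
          show |g (P i) * vbar (P i) - g x * vbar x| ≤ η1 * M + Mg * (L * δ)
          rw [heq]
          calc |(g (P i) - g x) * vbar x + g (P i) * (vbar (P i) - vbar x)|
              ≤ |(g (P i) - g x) * vbar x| + |g (P i) * (vbar (P i) - vbar x)| :=
                abs_add_le _ _
            _ = |g (P i) - g x| * |vbar x| + |g (P i)| * |vbar (P i) - vbar x| := by
                rw [abs_mul, abs_mul]
            _ ≤ η1 * M + Mg * (L * δ) :=
                add_le_add (mul_le_mul h1 h2 (abs_nonneg _) hη1.le)
                  (mul_le_mul h4 h3 (abs_nonneg _) hMg_nonneg)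
      have hCb : |∫ x in P i..P (i + 1),
          (g (P i) * v (P i) (x / ε) - g (P i) * vbar (P i))| ≤ η / (4 * N) := by
        have hval : (∫ x in P i..P (i + 1),
            (g (P i) * v (P i) (x / ε) - g (P i) * vbar (P i)))
            = g (P i) * ((∫ x in P i..P (i + 1), v (P i) (x / ε)) - δ * vbar (P i)) := by
          rw [intervalIntegral.integral_sub
            (f := fun x => g (P i) * v (P i) (x / ε)) (g := fun _ => g (P i) * vbar (P i))
            ((continuous_const.mul hcontvi).intervalIntegrable _ _)
            ((continuous_const :
              Continuous fun _ : ℝ => g (P i) * vbar (P i)).intervalIntegrable _ _)]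
          rw [intervalIntegral.integral_const_mul, intervalIntegral.integral_const,
            hPsucc i, smul_eq_mul]
          ring
        rw [hval, abs_mul]
        have hd := (hevε i hi).le
        calc |g (P i)| * |(∫ x in P i..P (i + 1), v (P i) (x / ε)) - δ * vbar (P i)|
            ≤ Mg * cC := mul_le_mul (hMg _) hd (abs_nonneg _) hMg_nonneg
          _ ≤ η / (4 * N) := by
              rw [hcCdef]
              have hp : 0 ≤ η / (4 * (N:ℝ) * (Mg + 1)) := by positivity
              have h1 : Mg * (η / (4 * (N:ℝ) * (Mg + 1)))
                  ≤ (Mg + 1) * (η / (4 * (N:ℝ) * (Mg + 1))) :=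
                mul_le_mul_of_nonneg_right (by linarith) hp
              have h2 : (Mg + 1) * (η / (4 * (N:ℝ) * (Mg + 1))) = η / (4 * (N:ℝ)) := by
                field_simp
              linarith [h1, h2.le, h2.ge]
      calc |((∫ x in P i..P (i + 1), (g x * v x (x / ε) - g (P i) * v (P i) (x / ε)))
            + ∫ x in P i..P (i + 1), (g (P i) * vbar (P i) - g x * vbar x))
            + ∫ x in P i..P (i + 1),
                (g (P i) * v (P i) (x / ε) - g (P i) * vbar (P i))|
          ≤ |(∫ x in P i..P (i + 1), (g x * v x (x / ε) - g (P i) * v (P i) (x / ε)))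
            + ∫ x in P i..P (i + 1), (g (P i) * vbar (P i) - g x * vbar x)|
            + |∫ x in P i..P (i + 1),
                (g (P i) * v (P i) (x / ε) - g (P i) * vbar (P i))| := abs_add_le _ _
        _ ≤ (|∫ x in P i..P (i + 1), (g x * v x (x / ε) - g (P i) * v (P i) (x / ε))|
            + |∫ x in P i..P (i + 1), (g (P i) * vbar (P i) - g x * vbar x)|)
            + |∫ x in P i..P (i + 1),
                (g (P i) * v (P i) (x / ε) - g (P i) * vbar (P i))| :=
            add_le_add (abs_add_le _ _) le_rfl
        _ ≤ 2 * ((η1 * M + Mg * (L * δ)) * δ) + η / (4 * N) := by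
            linarith [hB, hD, hCb]
    calc |∑ i ∈ Finset.range N,
          ∫ x in P i..P (i + 1), (g x * v x (x / ε) - g x * vbar x)|
        ≤ ∑ i ∈ Finset.range N,
          |∫ x in P i..P (i + 1), (g x * v x (x / ε) - g x * vbar x)| :=
          Finset.abs_sum_le_sum_abs _ _
      _ ≤ ∑ _i ∈ Finset.range N, (2 * ((η1 * M + Mg * (L * δ)) * δ) + η / (4 * N)) :=
          Finset.sum_le_sum key
      _ = (N : ℝ) * (2 * ((η1 * M + Mg * (L * δ)) * δ) + η / (4 * N)) := by
          rw [Finset.sum_const, Finset.card_range, nsmul_eq_mul]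
      _ < η := by
          have e2 : (N : ℝ) * (2 * ((η1 * M + Mg * (L * δ)) * δ) + η / (4 * N))
              = 2 * (η1 * M + Mg * (L * δ)) * (2 * S) + η / 4 := by
            rw [mul_add]
            congr 1
            · rw [← hNδ]; ring
            · field_simp
          rw [e2]
          have t1 : 2 * (η1 * M) * (2 * S) ≤ η / 4 := by
            have he : 2 * (η / (16 * S * (M + 1)) * M) * (2 * S)
                = (M / (M + 1)) * (η / 4) := by
              field_simp
              ring
            rw [hη1def, he]
            have h1 : M / (M + 1) ≤ 1 := (div_le_one (by positivity)).2 (by linarith)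
            have h2 : 0 ≤ η / 4 := by positivity
            nlinarith
          have t2 : 2 * (Mg * (L * δ)) * (2 * S) ≤ η / 4 := by
            have hq : 0 ≤ 4 * S * (Mg * L) := by positivity
            have s1 : 2 * (Mg * (L * δ)) * (2 * S) ≤ 2 * (Mg * (L * c2)) * (2 * S) := by
              calc 2 * (Mg * (L * δ)) * (2 * S) = 4 * S * (Mg * L) * δ := by ring
                _ ≤ 4 * S * (Mg * L) * c2 := mul_le_mul_of_nonneg_left hδc2 hq
                _ = 2 * (Mg * (L * c2)) * (2 * S) := by ring
            have s2 : 2 * (Mg * (L * (η / (16 * S * (Mg + 1) * (L + 1))))) * (2 * S)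
                = (Mg * L / ((Mg + 1) * (L + 1))) * (η / 4) := by
              field_simp
              ring
            rw [hc2def] at s1
            rw [s2] at s1
            have h1 : Mg * L / ((Mg + 1) * (L + 1)) ≤ 1 :=
              (div_le_one (by positivity)).2 (by nlinarith)
            have h2 : 0 ≤ η / 4 := by positivity
            nlinarith
          nlinarith [t1, t2, hη]
  refine main.congr' ?_
  filter_upwards [self_mem_nhdsWithin] with ε hε
  exact (hI1 ε hε).symm
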